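/- Let ε ~ N(0, σ²I_{n×n}), let h : ℝ^p → [0,+∞] be convex with the infimum t_c = inf{‖X(β−β*)‖ : h(β) < +∞} attained, and let t_f be the unique maximizer of f(t) = E[F(t)]. If for some s > 0 one has E[ sup_{β∈ℝ^p : ‖X(β−β*)‖ ≤ s} (εᵀX(β−β*) + h(β*) − h(β)) ] ≤ s² (equivalently f(s) + h(β*) ≤ s², assuming h(β*) < +∞), then t_f ≤ s. -/

import Mathlib

open MeasureTheory ProbabilityTheory
open scoped ENNReal NNReal

/-- Euclidean norm of a vector in `ℝ^k`. -/
noncomputable def l2norm {k : ℕ} (v : Fin k → ℝ) : ℝ := Real.sqrt (∑ i, (v i) ^ 2)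

/-- Euclidean inner product on `ℝ^k`. -/
noncomputable def dotp {k : ℕ} (u v : Fin k → ℝ) : ℝ := ∑ i, u i * v i

/-- The function `F(t) = sup_{β : ‖X(β-β*)‖ ≤ t} (εᵀX(β-β*) - h(β)) - t²/2`,
with values in `EReal` (the sup over the empty set is `⊥ = -∞`). -/
noncomputable def Fval {n p : ℕ} (X : Matrix (Fin n) (Fin p) ℝ) (bs : Fin p → ℝ)
    (h : (Fin p → ℝ) → ℝ≥0∞) (e : Fin n → ℝ) (t : ℝ) : EReal :=
  sSup {x : EReal | ∃ b : Fin p → ℝ, l2norm (X.mulVec (b - bs)) ≤ t ∧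
      x = (dotp e (X.mulVec (b - bs)) : EReal) - (h b : EReal)} - ((t ^ 2 / 2 : ℝ) : EReal)

/-- `t_c = inf {‖X(β-β*)‖ : h(β) < ∞}`. -/
noncomputable def tcrit {n p : ℕ} (X : Matrix (Fin n) (Fin p) ℝ) (bs : Fin p → ℝ)
    (h : (Fin p → ℝ) → ℝ≥0∞) : ℝ :=
  sInf {r : ℝ | ∃ b : Fin p → ℝ, h b ≠ ⊤ ∧ r = l2norm (X.mulVec (b - bs))}

/-- `f(t) = E[F(t)]`, with value `-∞` for `t < t_c`. -/
noncomputable def fInt {n p : ℕ} (X : Matrix (Fin n) (Fin p) ℝ) (bs : Fin p → ℝ)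
    (h : (Fin p → ℝ) → ℝ≥0∞) {Ω : Type*} [MeasurableSpace Ω] (P : Measure Ω)
    (ε : Ω → Fin n → ℝ) (t : ℝ) : EReal :=
  if t < tcrit X bs h then ⊥
  else ((∫ ω, (Fval X bs h (ε ω) t).toReal ∂P : ℝ) : EReal)

/-- The (real-valued) supremum `sup_{β : ‖X(β-β*)‖ ≤ s} (εᵀX(β-β*) + h(β*) - h(β))`;
vectors with `h(β) = ∞` contribute `-∞` and are discarded. -/
noncomputable def supShifted {n p : ℕ} (X : Matrix (Fin n) (Fin p) ℝ) (bs : Fin p → ℝ)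
    (h : (Fin p → ℝ) → ℝ≥0∞) (e : Fin n → ℝ) (s : ℝ) : ℝ :=
  sSup {x : ℝ | ∃ b : Fin p → ℝ, l2norm (X.mulVec (b - bs)) ≤ s ∧ h b ≠ ⊤ ∧
      x = dotp e (X.mulVec (b - bs)) + (h bs).toReal - (h b).toReal}


lemma l2norm_nonneg {k : ℕ} (v : Fin k → ℝ) : 0 ≤ l2norm v := Real.sqrt_nonneg _

lemma l2norm_zero {k : ℕ} : l2norm (0 : Fin k → ℝ) = 0 := by simp [l2norm]

lemma dotp_zero {k : ℕ} (u : Fin k → ℝ) : dotp u 0 = 0 := by simp [dotp]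

lemma dotp_le_l2 {k : ℕ} (u v : Fin k → ℝ) : dotp u v ≤ l2norm u * l2norm v := by
  simpa [l2norm, dotp] using Real.sum_mul_le_sqrt_mul_sqrt Finset.univ u v

lemma dotp_smul {k : ℕ} (u v : Fin k → ℝ) (a : ℝ) : dotp u (a • v) = a * dotp u v := by
  simp only [dotp, Pi.smul_apply, smul_eq_mul, Finset.mul_sum]
  exact Finset.sum_congr rfl fun i _ => by ring

lemma l2norm_smul {k : ℕ} (v : Fin k → ℝ) (a : ℝ) : l2norm (a • v) = |a| * l2norm v := by
  simp only [l2norm, Pi.smul_apply, smul_eq_mul, mul_pow]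
  rw [← Finset.mul_sum, Real.sqrt_mul (sq_nonneg a), Real.sqrt_sq_eq_abs]

lemma dotp_sub {k : ℕ} (u u' v : Fin k → ℝ) : dotp (u - u') v = dotp u v - dotp u' v := by
  simp [dotp, sub_mul, Finset.sum_sub_distrib]

lemma l2norm_le_sum_abs {k : ℕ} (v : Fin k → ℝ) : l2norm v ≤ ∑ i, |v i| := by
  have h1 : ∑ i, (v i) ^ 2 ≤ (∑ i, |v i|) ^ 2 := by
    have := Finset.sum_sq_le_sq_sum_of_nonneg (s := Finset.univ) (f := fun i => |v i|)
      (fun i _ => abs_nonneg _)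
    simpa [sq_abs] using this
  calc l2norm v ≤ Real.sqrt ((∑ i, |v i|) ^ 2) := Real.sqrt_le_sqrt h1
    _ = ∑ i, |v i| := Real.sqrt_sq (Finset.sum_nonneg fun i _ => abs_nonneg _)
section Main

variable {n p : ℕ} (X : Matrix (Fin n) (Fin p) ℝ) (bs : Fin p → ℝ) (h : (Fin p → ℝ) → ℝ≥0∞)

def Aset (e : Fin n → ℝ) (t : ℝ) : Set ℝ :=
  {x : ℝ | ∃ b : Fin p → ℝ, l2norm (X.mulVec (b - bs)) ≤ t ∧ h b ≠ ⊤ ∧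
      x = dotp e (X.mulVec (b - bs)) - (h b).toReal}

noncomputable def gfun (e : Fin n → ℝ) (t : ℝ) : ℝ := sSup (Aset X bs h e t)

variable (hfin : h bs ≠ ⊤)
include hfin in
lemma mem_Aset_self (e : Fin n → ℝ) {t : ℝ} (ht : 0 ≤ t) :
    -(h bs).toReal ∈ Aset X bs h e t := by
  refine ⟨bs, ?_, hfin, ?_⟩ <;> simp [l2norm_zero, dotp_zero, ht]

include hfin in
lemma Aset_nonempty (e : Fin n → ℝ) {t : ℝ} (ht : 0 ≤ t) : (Aset X bs h e t).Nonempty :=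
  ⟨_, mem_Aset_self X bs h hfin e ht⟩

lemma Aset_le (e : Fin n → ℝ) (t : ℝ) {x : ℝ} (hx : x ∈ Aset X bs h e t) :
    x ≤ l2norm e * t := by
  obtain ⟨b, hb, _, rfl⟩ := hx
  have h1 : dotp e (X.mulVec (b - bs)) ≤ l2norm e * t :=
    (dotp_le_l2 _ _).trans (mul_le_mul_of_nonneg_left hb (l2norm_nonneg e))
  have h2 : (0:ℝ) ≤ (h b).toReal := ENNReal.toReal_nonneg
  linarith

lemma Aset_bddAbove (e : Fin n → ℝ) (t : ℝ) : BddAbove (Aset X bs h e t) :=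
  ⟨l2norm e * t, fun _ hx => Aset_le X bs h e t hx⟩

include hfin in
lemma gfun_le (e : Fin n → ℝ) {t : ℝ} (ht : 0 ≤ t) : gfun X bs h e t ≤ l2norm e * t :=
  csSup_le (Aset_nonempty X bs h hfin e ht) (fun _ hx => Aset_le X bs h e t hx)

include hfin in
lemma gfun_ge (e : Fin n → ℝ) {t : ℝ} (ht : 0 ≤ t) : -(h bs).toReal ≤ gfun X bs h e t :=
  le_csSup (Aset_bddAbove X bs h e t) (mem_Aset_self X bs h hfin e ht)


include hfin in
lemma gfun_concave (hconv : ∀ b₁ b₂ : Fin p → ℝ, ∀ a : ℝ, 0 ≤ a → a ≤ 1 →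
      h (a • b₁ + (1 - a) • b₂) ≤ ENNReal.ofReal a * h b₁ + ENNReal.ofReal (1 - a) * h b₂)
    (e : Fin n → ℝ) {s t : ℝ} (hs : 0 < s) (hst : s < t) :
    gfun X bs h e t ≤ (t / s) * gfun X bs h e s + ((t - s) / s) * (h bs).toReal := by
  have ht : (0:ℝ) < t := hs.trans hst
  refine csSup_le (Aset_nonempty X bs h hfin e ht.le) ?_
  rintro x ⟨b, hbt, hbne, rfl⟩
  set a : ℝ := s / t with ha_def
  have ha0 : 0 < a := div_pos hs ht
  have ha1 : a ≤ 1 := by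
    rw [div_le_one ht]; exact hst.le
  set w : Fin n → ℝ := X.mulVec (b - bs) with hw
  set b' : Fin p → ℝ := a • b + (1 - a) • bs with hb'
  have hXb' : X.mulVec (b' - bs) = a • w := by
    have : b' - bs = a • (b - bs) := by
      rw [hb']; module
    rw [this, hw, Matrix.mulVec_smul]
  have hnorm : l2norm (X.mulVec (b' - bs)) ≤ s := by
    rw [hXb', l2norm_smul, abs_of_pos ha0]
    calc a * l2norm w ≤ a * t := mul_le_mul_of_nonneg_left hbt ha0.le
      _ = s := by rw [ha_def]; field_simp
  have hb'le : h b' ≤ ENNReal.ofReal a * h b + ENNReal.ofReal (1 - a) * h bs :=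
    hconv b bs a ha0.le ha1
  have hRHSne : ENNReal.ofReal a * h b + ENNReal.ofReal (1 - a) * h bs ≠ ⊤ := by
    apply ENNReal.add_ne_top.2
    exact ⟨ENNReal.mul_ne_top ENNReal.ofReal_ne_top hbne,
      ENNReal.mul_ne_top ENNReal.ofReal_ne_top hfin⟩
  have hb'ne : h b' ≠ ⊤ := fun hcon => hRHSne (top_le_iff.mp (hcon ▸ hb'le))
  have htoReal : (h b').toReal ≤ a * (h b).toReal + (1 - a) * (h bs).toReal := by
    have := ENNReal.toReal_mono hRHSne hb'le
    rwa [ENNReal.toReal_add (ENNReal.mul_ne_top ENNReal.ofReal_ne_top hbne)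
        (ENNReal.mul_ne_top ENNReal.ofReal_ne_top hfin), ENNReal.toReal_mul,
      ENNReal.toReal_mul, ENNReal.toReal_ofReal ha0.le,
      ENNReal.toReal_ofReal (by linarith : (0:ℝ) ≤ 1 - a)] at this
  have hmem : dotp e (X.mulVec (b' - bs)) - (h b').toReal ∈ Aset X bs h e s :=
    ⟨b', hnorm, hb'ne, rfl⟩
  have hle : dotp e (X.mulVec (b' - bs)) - (h b').toReal ≤ gfun X bs h e s :=
    le_csSup (Aset_bddAbove X bs h e s) hmem
  rw [hXb', dotp_smul] at hle
  have hkey : a * (dotp e w - (h b).toReal) - (1 - a) * (h bs).toReal ≤ gfun X bs h e s := by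
    nlinarith [htoReal, hle]
  rw [← mul_le_mul_iff_right₀ ha0]
  have hrw : a * ((t / s) * gfun X bs h e s + ((t - s) / s) * (h bs).toReal)
      = gfun X bs h e s + (1 - a) * (h bs).toReal := by
    rw [ha_def]; field_simp
  rw [hrw]
  linarith

def Sset (e : Fin n → ℝ) (s : ℝ) : Set ℝ :=
  {x : ℝ | ∃ b : Fin p → ℝ, l2norm (X.mulVec (b - bs)) ≤ s ∧ h b ≠ ⊤ ∧
      x = dotp e (X.mulVec (b - bs)) + (h bs).toReal - (h b).toReal}

lemma supShifted_eq_sSup (e : Fin n → ℝ) (s : ℝ) :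
    supShifted X bs h e s = sSup (Sset X bs h e s) := rfl

lemma Sset_le (e : Fin n → ℝ) (s : ℝ) {x : ℝ} (hx : x ∈ Sset X bs h e s) :
    x ≤ l2norm e * s + (h bs).toReal := by
  obtain ⟨b, hb, _, rfl⟩ := hx
  have h1 : dotp e (X.mulVec (b - bs)) ≤ l2norm e * s :=
    (dotp_le_l2 _ _).trans (mul_le_mul_of_nonneg_left hb (l2norm_nonneg e))
  have h2 : (0:ℝ) ≤ (h b).toReal := ENNReal.toReal_nonneg
  linarith

lemma Sset_bddAbove (e : Fin n → ℝ) (s : ℝ) : BddAbove (Sset X bs h e s) :=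
  ⟨l2norm e * s + (h bs).toReal, fun _ hx => Sset_le X bs h e s hx⟩

include hfin in
lemma Sset_zero_mem (e : Fin n → ℝ) {s : ℝ} (hs : 0 ≤ s) : (0:ℝ) ∈ Sset X bs h e s := by
  refine ⟨bs, ?_, hfin, ?_⟩ <;> simp [l2norm_zero, dotp_zero, hs]

include hfin in
lemma supShifted_nonneg (e : Fin n → ℝ) {s : ℝ} (hs : 0 ≤ s) : 0 ≤ supShifted X bs h e s :=
  le_csSup (Sset_bddAbove X bs h e s) (Sset_zero_mem X bs h hfin e hs)

include hfin in
lemma supShifted_le (e : Fin n → ℝ) {s : ℝ} (hs : 0 ≤ s) :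
    supShifted X bs h e s ≤ l2norm e * s + (h bs).toReal :=
  csSup_le ⟨0, Sset_zero_mem X bs h hfin e hs⟩ (fun _ hx => Sset_le X bs h e s hx)

include hfin in
lemma gfun_le_supShifted (e : Fin n → ℝ) {s : ℝ} (hs : 0 ≤ s) :
    gfun X bs h e s + (h bs).toReal ≤ supShifted X bs h e s := by
  rw [← le_sub_iff_add_le]
  refine csSup_le (Aset_nonempty X bs h hfin e hs) ?_
  rintro x ⟨b, hb, hbne, rfl⟩
  rw [le_sub_iff_add_le]
  refine le_csSup (Sset_bddAbove X bs h e s) ⟨b, hb, hbne, by ring⟩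

lemma ennreal_coe_eq (x : ℝ≥0∞) (hx : x ≠ ⊤) : (x : EReal) = ((x.toReal : ℝ) : EReal) := by
  have h1 : (x : EReal) ≠ ⊤ := by rwa [ne_eq, EReal.coe_ennreal_eq_top_iff]
  have h2 : (x : EReal) ≠ ⊥ := ((EReal.bot_lt_coe 0).trans_le (EReal.coe_ennreal_nonneg x)).ne'
  rw [← EReal.coe_toReal h1 h2, EReal.toReal_coe_ennreal]

include hfin in
lemma sSup_EReal_eq (e : Fin n → ℝ) {t : ℝ} (ht : 0 ≤ t) :
    sSup {x : EReal | ∃ b : Fin p → ℝ, l2norm (X.mulVec (b - bs)) ≤ t ∧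
      x = (dotp e (X.mulVec (b - bs)) : EReal) - (h b : EReal)}
      = ((gfun X bs h e t : ℝ) : EReal) := by
  set S : Set EReal := {x : EReal | ∃ b : Fin p → ℝ, l2norm (X.mulVec (b - bs)) ≤ t ∧
      x = (dotp e (X.mulVec (b - bs)) : EReal) - (h b : EReal)} with hS
  have hub : ∀ x ∈ Aset X bs h e t, (x : EReal) ≤ sSup S := by
    rintro x ⟨b, hb, hbne, rfl⟩
    refine le_sSup ⟨b, hb, ?_⟩
    rw [ennreal_coe_eq _ hbne, ← EReal.coe_sub]
  apply le_antisymm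
  · apply sSup_le
    rintro x ⟨b, hb, rfl⟩
    by_cases hbne : h b = ⊤
    · rw [hbne, EReal.coe_ennreal_top, EReal.sub_top]
      exact bot_le
    · rw [ennreal_coe_eq _ hbne, ← EReal.coe_sub, EReal.coe_le_coe_iff]
      exact le_csSup (Aset_bddAbove X bs h e t) ⟨b, hb, hbne, rfl⟩
  · by_cases htop : sSup S = ⊤
    · rw [htop]; exact le_top
    · have hbot : sSup S ≠ ⊥ := by
        intro hcon
        have := hub _ (mem_Aset_self X bs h hfin e ht)
        rw [hcon, le_bot_iff] at this
        exact EReal.coe_ne_bot _ this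
      have hrw := EReal.coe_toReal htop hbot
      rw [← hrw, EReal.coe_le_coe_iff]
      refine csSup_le (Aset_nonempty X bs h hfin e ht) (fun x hx => ?_)
      have := (hub x hx).trans_eq hrw.symm
      exact EReal.coe_le_coe_iff.1 this

include hfin in
lemma Fval_eq (e : Fin n → ℝ) {t : ℝ} (ht : 0 ≤ t) :
    Fval X bs h e t = ((gfun X bs h e t - t ^ 2 / 2 : ℝ) : EReal) := by
  rw [Fval, sSup_EReal_eq X bs h hfin e ht, ← EReal.coe_sub]

include hfin in
lemma tcrit_eq : tcrit X bs h = 0 := by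
  have hmem : (0:ℝ) ∈ {r : ℝ | ∃ b : Fin p → ℝ, h b ≠ ⊤ ∧ r = l2norm (X.mulVec (b - bs))} :=
    ⟨bs, hfin, by simp [l2norm_zero]⟩
  apply le_antisymm
  · exact csInf_le ⟨0, by rintro r ⟨b, _, rfl⟩; exact l2norm_nonneg _⟩ hmem
  · exact le_csInf ⟨0, hmem⟩ (by rintro r ⟨b, _, rfl⟩; exact l2norm_nonneg _)

include hfin in
lemma gfun_lip (e e' : Fin n → ℝ) {t : ℝ} (ht : 0 ≤ t) :
    gfun X bs h e t ≤ gfun X bs h e' t + l2norm (e - e') * t := by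
  refine csSup_le (Aset_nonempty X bs h hfin e ht) ?_
  rintro x ⟨b, hb, hbne, rfl⟩
  have h1 : dotp e' (X.mulVec (b - bs)) - (h b).toReal ≤ gfun X bs h e' t :=
    le_csSup (Aset_bddAbove X bs h e' t) ⟨b, hb, hbne, rfl⟩
  have h2 : dotp (e - e') (X.mulVec (b - bs)) ≤ l2norm (e - e') * t :=
    (dotp_le_l2 _ _).trans (mul_le_mul_of_nonneg_left hb (l2norm_nonneg _))
  have h3 := dotp_sub e e' (X.mulVec (b - bs))
  linarith

include hfin in
lemma gfun_continuous {t : ℝ} (ht : 0 ≤ t) : Continuous (fun e => gfun X bs h e t) := by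
  have key : ∀ e e' : Fin n → ℝ, gfun X bs h e t - gfun X bs h e' t ≤ (t * n) * dist e e' := by
    intro e e'
    have h1 := gfun_lip X bs h hfin e e' ht
    have h2 : l2norm (e - e') ≤ n * dist e e' := by
      refine (l2norm_le_sum_abs _).trans ?_
      have : ∀ i, |(e - e') i| ≤ dist e e' := by
        intro i
        have := norm_le_pi_norm (e - e') i
        rwa [← dist_eq_norm, Real.norm_eq_abs] at this
      calc ∑ i, |(e - e') i| ≤ ∑ _i : Fin n, dist e e' :=
            Finset.sum_le_sum fun i _ => this i
        _ = n * dist e e' := by simp [Finset.sum_const, mul_comm]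
    nlinarith [dist_nonneg (x := e) (y := e'), l2norm_nonneg (e - e')]
  have lip : LipschitzWith (t * n).toNNReal (fun e => gfun X bs h e t) := by
    apply LipschitzWith.of_dist_le_mul
    intro e e'
    rw [Real.dist_eq, abs_sub_le_iff]
    constructor
    · exact (key e e').trans (by
        rw [Real.coe_toNNReal _ (by positivity)])
    · exact (key e' e).trans (by
        rw [Real.coe_toNNReal _ (by positivity), dist_comm])
  exact lip.continuous

end Main


section Lip
variable {n p : ℕ} (X : Matrix (Fin n) (Fin p) ℝ) (bs : Fin p → ℝ) (h : (Fin p → ℝ) → ℝ≥0∞)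
variable (hfin : h bs ≠ ⊤)

include hfin in
lemma supShifted_lip (e e' : Fin n → ℝ) {s : ℝ} (hs : 0 ≤ s) :
    supShifted X bs h e s ≤ supShifted X bs h e' s + l2norm (e - e') * s := by
  refine csSup_le ⟨0, Sset_zero_mem X bs h hfin e hs⟩ ?_
  rintro x ⟨b, hb, hbne, rfl⟩
  have h1 : dotp e' (X.mulVec (b - bs)) + (h bs).toReal - (h b).toReal
      ≤ supShifted X bs h e' s :=
    le_csSup (Sset_bddAbove X bs h e' s) ⟨b, hb, hbne, rfl⟩
  have h2 : dotp (e - e') (X.mulVec (b - bs)) ≤ l2norm (e - e') * s :=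
    (dotp_le_l2 _ _).trans (mul_le_mul_of_nonneg_left hb (l2norm_nonneg _))
  have h3 := dotp_sub e e' (X.mulVec (b - bs))
  linarith

include hfin in
lemma supShifted_continuous {s : ℝ} (hs : 0 ≤ s) :
    Continuous (fun e => supShifted X bs h e s) := by
  have key : ∀ e e' : Fin n → ℝ,
      supShifted X bs h e s - supShifted X bs h e' s ≤ (s * n) * dist e e' := by
    intro e e'
    have h1 := supShifted_lip X bs h hfin e e' hs
    have h2 : l2norm (e - e') ≤ n * dist e e' := by
      refine (l2norm_le_sum_abs _).trans ?_
      have hi : ∀ i, |(e - e') i| ≤ dist e e' := by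
        intro i
        have := norm_le_pi_norm (e - e') i
        rwa [← dist_eq_norm, Real.norm_eq_abs] at this
      calc ∑ i, |(e - e') i| ≤ ∑ _i : Fin n, dist e e' :=
            Finset.sum_le_sum fun i _ => hi i
        _ = n * dist e e' := by simp [Finset.sum_const, mul_comm]
    nlinarith [dist_nonneg (x := e) (y := e'), l2norm_nonneg (e - e')]
  have lip : LipschitzWith (s * n).toNNReal (fun e => supShifted X bs h e s) := by
    apply LipschitzWith.of_dist_le_mul
    intro e e'
    rw [Real.dist_eq, abs_sub_le_iff]
    constructor
    · exact (key e e').trans (by rw [Real.coe_toNNReal _ (by positivity)])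
    · exact (key e' e).trans (by rw [Real.coe_toNNReal _ (by positivity), dist_comm])
  exact lip.continuous

end Lip

lemma integrable_abs_gaussian (σ : ℝ≥0) (hσ : 0 < σ) :
    Integrable (fun x : ℝ => |x|) (gaussianReal 0 (σ ^ 2)) := by
  have hv : (σ ^ 2 : ℝ≥0) ≠ 0 := by positivity
  rw [gaussianReal_of_var_ne_zero 0 hv]
  rw [integrable_withDensity_iff_integrable_smul' (measurable_gaussianPDF 0 (σ ^ 2))
    (Filter.Eventually.of_forall fun x => ENNReal.ofReal_lt_top)]
  have hb : (0:ℝ) < (2 * ((σ:ℝ) ^ 2))⁻¹ := by positivity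
  have hInt : Integrable (fun x : ℝ => (Real.sqrt (2 * Real.pi * (σ ^ 2 : ℝ≥0)))⁻¹ *
      (|x| * Real.exp (-(2 * ((σ:ℝ) ^ 2))⁻¹ * x ^ 2))) volume := by
    refine Integrable.const_mul ?_ _
    have := (integrable_mul_exp_neg_mul_sq hb).abs
    refine this.congr ?_
    refine Filter.Eventually.of_forall fun x => ?_
    simp only []
    rw [abs_mul, abs_of_pos (Real.exp_pos _)]
  refine hInt.congr ?_
  refine Filter.Eventually.of_forall fun x => ?_
  simp only [smul_eq_mul]
  rw [gaussianPDF, ENNReal.toReal_ofReal (gaussianPDFReal_nonneg _ _ _), gaussianPDFReal]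
  simp only [sub_zero]
  push_cast
  ring_nf

lemma map_eval_pi_gauss {n : ℕ} (σ : ℝ≥0) (i : Fin n) :
    Measure.map (fun v : Fin n → ℝ => v i)
      (Measure.pi fun _ : Fin n => gaussianReal 0 (σ ^ 2)) = gaussianReal 0 (σ ^ 2) := by
  ext s hs
  rw [Measure.map_apply (measurable_pi_apply i) hs]
  have hpre : (fun v : Fin n → ℝ => v i) ⁻¹' s
      = Set.pi Set.univ (Function.update (fun _ => (Set.univ : Set ℝ)) i s) :=
    Set.eval_preimage
  rw [hpre, Measure.pi_pi]
  rw [Finset.prod_eq_single i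
    (fun j _ hj => by rw [Function.update_of_ne hj]; exact measure_univ)
    (fun hi => absurd (Finset.mem_univ i) hi)]
  rw [Function.update_self]

lemma integrable_l2norm_pi {n : ℕ} (σ : ℝ≥0) (hσ : 0 < σ) :
    Integrable (fun v : Fin n → ℝ => l2norm v)
      (Measure.pi fun _ : Fin n => gaussianReal 0 (σ ^ 2)) := by
  have hcoord : ∀ i : Fin n, Integrable (fun v : Fin n → ℝ => |v i|)
      (Measure.pi fun _ : Fin n => gaussianReal 0 (σ ^ 2)) := by
    intro i
    have h1 := integrable_abs_gaussian σ hσ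
    rw [← map_eval_pi_gauss (n := n) σ i] at h1
    exact (integrable_map_measure h1.aestronglyMeasurable
      (measurable_pi_apply i).aemeasurable).mp h1
  have hsum : Integrable (fun v : Fin n → ℝ => ∑ i, |v i|)
      (Measure.pi fun _ : Fin n => gaussianReal 0 (σ ^ 2)) :=
    integrable_finset_sum _ (fun i _ => hcoord i)
  refine hsum.mono' ?_ ?_
  · have : Continuous (fun v : Fin n → ℝ => l2norm v) := by
      unfold l2norm
      fun_prop
    exact this.aestronglyMeasurable
  · refine Filter.Eventually.of_forall fun v => ?_
    rw [Real.norm_eq_abs, abs_of_nonneg (l2norm_nonneg v)]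
    exact l2norm_le_sum_abs v

/-- if `E[sup_{‖X(β-β*)‖≤s} (εᵀX(β-β*) + h(β*) - h(β))] ≤ s²` for some
`s > 0` (equivalently `f(s) + h(β*) ≤ s²`), then the unique maximizer `t_f` of
`f = E[F(·)]` satisfies `t_f ≤ s`. -/
theorem tf_upper_bound {n p : ℕ} (X : Matrix (Fin n) (Fin p) ℝ) (bs : Fin p → ℝ)
    (h : (Fin p → ℝ) → ℝ≥0∞)
    (hconv : ∀ b₁ b₂ : Fin p → ℝ, ∀ a : ℝ, 0 ≤ a → a ≤ 1 →
      h (a • b₁ + (1 - a) • b₂) ≤ ENNReal.ofReal a * h b₁ + ENNReal.ofReal (1 - a) * h b₂)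
    (hattained : ∃ b₀ : Fin p → ℝ, h b₀ ≠ ⊤ ∧
      l2norm (X.mulVec (b₀ - bs)) = tcrit X bs h)
    (hfin : h bs ≠ ⊤)
    {Ω : Type*} [MeasurableSpace Ω] (P : Measure Ω) [IsProbabilityMeasure P]
    (σ : ℝ≥0) (hσ : 0 < σ) (ε : Ω → Fin n → ℝ) (hmeas : Measurable ε)
    (hgauss : Measure.map ε P = Measure.pi fun _ : Fin n => gaussianReal 0 (σ ^ 2))
    (tf : ℝ) (htf : ∀ t : ℝ, fInt X bs h P ε t ≤ fInt X bs h P ε tf)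
    (s : ℝ) (hspos : 0 < s)
    (hkey : (∫ ω, supShifted X bs h (ε ω) s ∂P) ≤ s ^ 2) :
    tf ≤ s := by
  by_contra hcon
  push_neg at hcon
  have htc : tcrit X bs h = 0 := tcrit_eq X bs h hfin
  have hs0 : (0:ℝ) ≤ s := hspos.le
  have htf0 : (0:ℝ) < tf := hspos.trans hcon
  have hlam : (0:ℝ) ≤ (tf - s) / s := div_nonneg (by linarith) hs0
  -- integrability of the norm of the noise
  have hN : Integrable (fun ω => l2norm (ε ω)) P := by
    have h1 := integrable_l2norm_pi (n := n) σ hσ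
    rw [← hgauss] at h1
    exact (integrable_map_measure h1.aestronglyMeasurable hmeas.aemeasurable).mp h1
  set Gs : Ω → ℝ := fun ω => gfun X bs h (ε ω) s with hGsdef
  set Gt : Ω → ℝ := fun ω => gfun X bs h (ε ω) tf with hGtdef
  set Q : Ω → ℝ := fun ω => supShifted X bs h (ε ω) s with hQdef
  have hGsm : AEStronglyMeasurable Gs P :=
    ((gfun_continuous X bs h hfin hs0).measurable.comp hmeas).aestronglyMeasurable
  have hGtm : AEStronglyMeasurable Gt P :=
    ((gfun_continuous X bs h hfin htf0.le).measurable.comp hmeas).aestronglyMeasurable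
  have hQm : AEStronglyMeasurable Q P :=
    ((supShifted_continuous X bs h hfin hs0).measurable.comp hmeas).aestronglyMeasurable
  have hbR : (0:ℝ) ≤ (h bs).toReal := ENNReal.toReal_nonneg
  -- integrability of Gs, Gt, Q
  have hboundInt : ∀ c : ℝ, Integrable (fun ω => l2norm (ε ω) * c + (h bs).toReal) P :=
    fun c => (hN.mul_const c).add (integrable_const _)
  have hGsint : Integrable Gs P := by
    refine (hboundInt s).mono' hGsm (Filter.Eventually.of_forall fun ω => ?_)
    rw [Real.norm_eq_abs, abs_le]
    constructor
    · have := gfun_ge X bs h hfin (ε ω) hs0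
      have h2 : (0:ℝ) ≤ l2norm (ε ω) * s := mul_nonneg (l2norm_nonneg _) hs0
      linarith
    · have := gfun_le X bs h hfin (ε ω) hs0
      linarith
  have hGtint : Integrable Gt P := by
    refine (hboundInt tf).mono' hGtm (Filter.Eventually.of_forall fun ω => ?_)
    rw [Real.norm_eq_abs, abs_le]
    constructor
    · have := gfun_ge X bs h hfin (ε ω) htf0.le
      have h2 : (0:ℝ) ≤ l2norm (ε ω) * tf := mul_nonneg (l2norm_nonneg _) htf0.le
      linarith
    · have := gfun_le X bs h hfin (ε ω) htf0.le
      linarith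
  have hQint : Integrable Q P := by
    refine (hboundInt s).mono' hQm (Filter.Eventually.of_forall fun ω => ?_)
    rw [Real.norm_eq_abs, abs_of_nonneg (supShifted_nonneg X bs h hfin (ε ω) hs0)]
    exact supShifted_le X bs h hfin (ε ω) hs0
  -- pointwise inequality
  have hpt : ∀ ω, Gt ω ≤ Gs ω + ((tf - s) / s) * Q ω := by
    intro ω
    have h1 := gfun_concave X bs h hfin hconv (ε ω) hspos hcon
    have h2 := gfun_le_supShifted X bs h hfin (ε ω) hs0
    have h3 : (tf / s) * Gs ω + ((tf - s) / s) * (h bs).toReal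
        = Gs ω + ((tf - s) / s) * (Gs ω + (h bs).toReal) := by
      field_simp
      ring
    have h4 : ((tf - s) / s) * (Gs ω + (h bs).toReal) ≤ ((tf - s) / s) * Q ω :=
      mul_le_mul_of_nonneg_left h2 hlam
    calc Gt ω ≤ (tf / s) * Gs ω + ((tf - s) / s) * (h bs).toReal := h1
      _ = Gs ω + ((tf - s) / s) * (Gs ω + (h bs).toReal) := h3
      _ ≤ Gs ω + ((tf - s) / s) * Q ω := by linarith
  -- integral inequality
  have hint1 : ∫ ω, Gt ω ∂P ≤ ∫ ω, (Gs ω + ((tf - s) / s) * Q ω) ∂P :=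
    integral_mono hGtint (hGsint.add (hQint.const_mul _))
      (fun ω => hpt ω)
  rw [integral_add hGsint (hQint.const_mul _), integral_const_mul] at hint1
  have hkey2 : ((tf - s) / s) * ∫ ω, Q ω ∂P ≤ ((tf - s) / s) * s ^ 2 :=
    mul_le_mul_of_nonneg_left hkey hlam
  have hls : ((tf - s) / s) * s ^ 2 = (tf - s) * s := by
    field_simp
  -- use the maximizer property at s
  have hF := htf s
  rw [fInt, fInt, htc, if_neg (not_lt.2 hs0), if_neg (not_lt.2 htf0.le)] at hF
  have heqs : ∫ ω, (Fval X bs h (ε ω) s).toReal ∂P = ∫ ω, (Gs ω - s ^ 2 / 2) ∂P :=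
    integral_congr_ae (Filter.Eventually.of_forall fun ω => by
      show (Fval X bs h (ε ω) s).toReal = Gs ω - s ^ 2 / 2
      rw [Fval_eq X bs h hfin (ε ω) hs0, EReal.toReal_coe])
  have heqt : ∫ ω, (Fval X bs h (ε ω) tf).toReal ∂P = ∫ ω, (Gt ω - tf ^ 2 / 2) ∂P :=
    integral_congr_ae (Filter.Eventually.of_forall fun ω => by
      show (Fval X bs h (ε ω) tf).toReal = Gt ω - tf ^ 2 / 2
      rw [Fval_eq X bs h hfin (ε ω) htf0.le, EReal.toReal_coe])
  rw [heqs, heqt] at hF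
  have hF' : ∫ ω, (Gs ω - s ^ 2 / 2) ∂P ≤ ∫ ω, (Gt ω - tf ^ 2 / 2) ∂P :=
    EReal.coe_le_coe_iff.1 hF
  rw [integral_sub hGsint (integrable_const _), integral_sub hGtint (integrable_const _)] at hF'
  simp only [integral_const, measure_univ, probReal_univ, ENNReal.toReal_one, smul_eq_mul, one_smul,
    one_mul] at hF'
  nlinarith [hF', hint1, hkey2, hls, sq_nonneg (tf - s)]
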